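/- arXiv:1103.0796 — 4 statements merged into one kernel-verified Lean document; each statement's English description precedes it below -/
import Mathlib

section
/- Let C > 0 and γ > 1 be real numbers, let t₀ < β be real numbers, and let Y : [t₀, β) → ℝ be a differentiable function with Y(t) > 0 for all t ∈ [t₀, β), satisfying Y′(t) ≤ C·Y(t)^γ on [t₀, β). Assume Y(s) → +∞ as s → β from the left. Then β − t₀ ≥ Y(t₀)^{1−γ} / ((γ−1)·C). Equivalently, C·(γ−1)·(β − t₀) ≥ (Y(t₀))^{1−γ}, i.e. (β − t₀)^{−1/(γ−1)} ≤ ((γ−1)C)^{1/(γ−1)} · Y(t₀). -/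
open Set Filter

/-- Lower bound on the blow-up time: if `Y > 0` satisfies `Y′ ≤ C Y^γ` on
`[t₀, β)` with `γ > 1` and `Y(s) → +∞` as `s → β⁻`, then
`β - t₀ ≥ Y(t₀)^{1-γ} / ((γ-1) C)`. -/
theorem blowup_time_lower_bound
    (C γ t₀ β : ℝ) (hC : 0 < C) (hγ : 1 < γ) (htβ : t₀ < β)
    (Y Y' : ℝ → ℝ)
    (hderiv : ∀ t ∈ Ico t₀ β, HasDerivWithinAt Y (Y' t) (Ico t₀ β) t)
    (hpos : ∀ t ∈ Ico t₀ β, 0 < Y t)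
    (hineq : ∀ t ∈ Ico t₀ β, Y' t ≤ C * Y t ^ γ)
    (hblow : Tendsto Y (nhdsWithin β (Iio β)) atTop) :
    Y t₀ ^ (1 - γ) / ((γ - 1) * C) ≤ β - t₀ := by
  set K := (γ - 1) * C with hK
  have hKpos : 0 < K := mul_pos (by linarith) hC
  set W : ℝ → ℝ := fun t => Y t ^ (1 - γ) + K * t with hW
  set W' : ℝ → ℝ := fun t => (1 - γ) * Y t ^ (-γ) * Y' t + K with hW'
  have hWd : ∀ t ∈ Ico t₀ β, HasDerivWithinAt W (W' t) (Ico t₀ β) t := by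
    intro t ht
    have h1 : HasDerivWithinAt (fun s => Y s ^ (1 - γ))
        ((1 - γ) * Y t ^ (-γ) * Y' t) (Ico t₀ β) t := by
      have h0 := (Real.hasDerivAt_rpow_const (x := Y t) (p := 1 - γ)
        (Or.inl (hpos t ht).ne')).comp_hasDerivWithinAt t (hderiv t ht)
      simpa [mul_assoc, Function.comp_def, show (1 - γ - 1 : ℝ) = -γ by ring] using h0
    simpa [hW, Pi.add_def] using h1.add ((hasDerivWithinAt_id t _).const_mul K)
  have hW'nonneg : ∀ t ∈ Ico t₀ β, 0 ≤ W' t := by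
    intro t ht
    have hYt := hpos t ht
    have h1 : Y' t * Y t ^ (-γ) ≤ C * Y t ^ γ * Y t ^ (-γ) :=
      mul_le_mul_of_nonneg_right (hineq t ht) (Real.rpow_nonneg hYt.le _)
    have h2 : Y t ^ γ * Y t ^ (-γ) = 1 := by
      rw [← Real.rpow_add hYt]; simp
    have h3 : Y' t * Y t ^ (-γ) ≤ C := by
      calc Y' t * Y t ^ (-γ) ≤ C * Y t ^ γ * Y t ^ (-γ) := h1
        _ = C := by rw [mul_assoc, h2, mul_one]
    have h4 : (1 - γ) * (Y' t * Y t ^ (-γ)) ≥ (1 - γ) * C :=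
      mul_le_mul_of_nonpos_left h3 (by linarith)
    simp only [hW']
    nlinarith [h4]
  have hmono : MonotoneOn W (Ico t₀ β) := by
    apply monotoneOn_of_hasDerivWithinAt_nonneg (convex_Ico t₀ β)
      (fun t ht => (hWd t ht).continuousWithinAt) (f' := W')
    · intro t ht
      rw [interior_Ico] at ht ⊢
      exact ((hWd t (Ioo_subset_Ico_self ht)).mono Ioo_subset_Ico_self)
    · intro t ht
      rw [interior_Ico] at ht
      exact hW'nonneg t (Ioo_subset_Ico_self ht)
  -- key inequality: Y t₀ ^ (1-γ) ≤ Y t ^ (1-γ) + K * (β - t₀) for t ∈ Ico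
  have hkey : ∀ t ∈ Ico t₀ β, Y t₀ ^ (1 - γ) ≤ Y t ^ (1 - γ) + K * (β - t₀) := by
    intro t ht
    have h0 : t₀ ∈ Ico t₀ β := ⟨le_refl _, htβ⟩
    have := hmono h0 ht ht.1
    simp only [hW] at this
    nlinarith [ht.2, hKpos]
  -- limit: Y t ^ (1-γ) → 0 as t → β⁻
  have hlim : Tendsto (fun t => Y t ^ (1 - γ) + K * (β - t₀))
      (nhdsWithin β (Iio β)) (nhds (0 + K * (β - t₀))) := by
    apply Tendsto.add_const
    have : Tendsto (fun x : ℝ => x ^ (-(γ - 1))) atTop (nhds 0) :=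
      tendsto_rpow_neg_atTop (by linarith)
    have := this.comp hblow
    simpa [neg_sub, Function.comp_def] using this
  have hne : (nhdsWithin β (Iio β)).NeBot := nhdsLT_neBot β
  have hfinal : Y t₀ ^ (1 - γ) ≤ 0 + K * (β - t₀) := by
    refine ge_of_tendsto hlim ?_
    filter_upwards [Ioo_mem_nhdsLT_of_mem (by exact ⟨htβ, le_refl β⟩ : β ∈ Ioc t₀ β)]
      with t ht
    exact hkey t ⟨ht.1.le, ht.2⟩
  rw [div_le_iff₀ hKpos]
  linarith [hfinal]
end

section
/- Let T > 0, let I be a countable index set, and let ((α_i, β_i))_{i∈I} be a family of pairwise disjoint nonempty open intervals contained in (0,T). Let h : (0,T) → ℝ be a nonnegative Lebesgue-integrable function, let C > 0 and 0 < p < 1 be real numbers, and assume that for every i ∈ I and every t ∈ (α_i, β_i) one has C·(β_i − t)^{−p} ≤ 1 + h(t). Then (C/(1−p)) · Σ_{i∈I} (β_i − α_i)^{1−p} ≤ T + ∫₀ᵀ h(t) dt; in particular Σ_{i∈I} (β_i − α_i)^{1−p} < ∞. -/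
open Set MeasureTheory

/-- If pairwise disjoint intervals `(αᵢ, βᵢ) ⊆ (0,T)` satisfy
`C (βᵢ - t)^{-p} ≤ 1 + h(t)` on each `(αᵢ, βᵢ)` for an integrable nonnegative
`h`, then `(C/(1-p)) Σᵢ (βᵢ - αᵢ)^{1-p} ≤ T + ∫₀ᵀ h`; in particular the sum
`Σᵢ (βᵢ - αᵢ)^{1-p}` is finite. -/
theorem interval_length_power_sum
    {I : Type*} [Countable I]
    (T C p : ℝ) (hT : 0 < T) (hC : 0 < C) (hp0 : 0 < p) (hp1 : p < 1)
    (a b : I → ℝ) (hab : ∀ i, a i < b i)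
    (hsub : ∀ i, Ioo (a i) (b i) ⊆ Ioo 0 T)
    (hdisj : Pairwise (Function.onFun Disjoint fun i => Ioo (a i) (b i)))
    (h : ℝ → ℝ) (hint : IntegrableOn h (Ioo 0 T))
    (hnonneg : ∀ t ∈ Ioo (0 : ℝ) T, 0 ≤ h t)
    (hbound : ∀ i, ∀ t ∈ Ioo (a i) (b i), C * (b i - t) ^ (-p) ≤ 1 + h t) :
    Summable (fun i => (b i - a i) ^ (1 - p)) ∧
      (C / (1 - p)) * ∑' i, (b i - a i) ^ (1 - p) ≤ T + ∫ t in Ioo (0 : ℝ) T, h t := by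
  have h1p : 0 < 1 - p := by linarith
  set f : ℝ → ℝ := fun t => 1 + h t with hf
  have hfint : IntegrableOn f (Ioo 0 T) := by
    exact (integrableOn_const measure_Ioo_lt_top.ne).add hint
  -- integrability of the rpow function on each interval
  have hgint : ∀ i, IntegrableOn (fun t => C * (b i - t) ^ (-p)) (Ioo (a i) (b i)) := by
    intro i
    have h1 : IntervalIntegrable (fun x : ℝ => x ^ (-p)) volume (b i - a i) (b i - b i) :=
      intervalIntegral.intervalIntegrable_rpow' (by linarith)
    have h2 := (h1.comp_sub_left (b i)).const_mul C
    have h3 : b i - (b i - a i) = a i := by ring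
    have h4 : b i - (b i - b i) = b i := by ring
    rw [h3, h4] at h2
    exact ((intervalIntegrable_iff_integrableOn_Ioc_of_le (hab i).le).mp h2).mono_set
      Ioo_subset_Ioc_self
  -- exact value of the interval integral
  have key : ∀ i, C / (1 - p) * (b i - a i) ^ (1 - p)
      = ∫ t in Ioo (a i) (b i), C * (b i - t) ^ (-p) := by
    intro i
    have hba : 0 < b i - a i := sub_pos.2 (hab i)
    rw [← integral_Ioc_eq_integral_Ioo, ← intervalIntegral.integral_of_le (hab i).le,
      intervalIntegral.integral_const_mul]
    have hcomp := intervalIntegral.integral_comp_sub_left (a := a i) (b := b i)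
      (fun x : ℝ => x ^ (-p)) (b i)
    rw [hcomp, sub_self]
    rw [integral_rpow (Or.inl (by linarith))]
    rw [Real.zero_rpow (by linarith)]
    have : -p + 1 = 1 - p := by ring
    rw [this, sub_zero]
    field_simp
  -- per-interval inequality
  have hle : ∀ i, C / (1 - p) * (b i - a i) ^ (1 - p) ≤ ∫ t in Ioo (a i) (b i), f t := by
    intro i
    rw [key i]
    exact setIntegral_mono_on (hgint i) (hfint.mono_set (hsub i)) measurableSet_Ioo
      (fun t ht => hbound i t ht)
  -- total integral of f
  have htot : ∫ t in Ioo (0 : ℝ) T, f t = T + ∫ t in Ioo (0 : ℝ) T, h t := by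
    rw [integral_add (f := fun _ => (1 : ℝ)) (g := h) (μ := volume.restrict (Ioo (0 : ℝ) T))
      (integrableOn_const measure_Ioo_lt_top.ne) hint]
    simp [Real.volume_Ioo, ENNReal.toReal_ofReal hT.le, hT.le]
  -- finite sum bound
  have hsum : ∀ s : Finset I, ∑ i ∈ s, C / (1 - p) * (b i - a i) ^ (1 - p)
      ≤ T + ∫ t in Ioo (0 : ℝ) T, h t := by
    intro s
    have h1 : ∑ i ∈ s, C / (1 - p) * (b i - a i) ^ (1 - p)
        ≤ ∑ i ∈ s, ∫ t in Ioo (a i) (b i), f t :=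
      Finset.sum_le_sum fun i _ => hle i
    have h2 : ∑ i ∈ s, ∫ t in Ioo (a i) (b i), f t
        = ∫ t in ⋃ i ∈ s, Ioo (a i) (b i), f t :=
      (integral_biUnion_finset s (fun i _ => measurableSet_Ioo)
        (hdisj.set_pairwise _) (fun i _ => hfint.mono_set (hsub i))).symm
    have h3 : ∫ t in ⋃ i ∈ s, Ioo (a i) (b i), f t ≤ ∫ t in Ioo (0 : ℝ) T, f t := by
      apply setIntegral_mono_set hfint
      · filter_upwards [ae_restrict_mem measurableSet_Ioo] with t ht
        simp only [hf, Pi.zero_apply]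
        linarith [hnonneg t ht]
      · exact Filter.Eventually.of_forall (iUnion₂_subset fun i _ => hsub i)
    calc ∑ i ∈ s, C / (1 - p) * (b i - a i) ^ (1 - p) ≤ _ := h1
      _ = _ := h2
      _ ≤ _ := h3
      _ = _ := htot
  have hpos : (0 : ℝ) < C / (1 - p) := div_pos hC h1p
  have hnn : ∀ i, 0 ≤ C / (1 - p) * (b i - a i) ^ (1 - p) := fun i =>
    mul_nonneg hpos.le (Real.rpow_nonneg (by linarith [hab i]) _)
  have hS : Summable (fun i => C / (1 - p) * (b i - a i) ^ (1 - p)) :=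
    summable_of_sum_le hnn hsum
  have hS' : Summable (fun i => (b i - a i) ^ (1 - p)) := by
    refine (hS.mul_left (C / (1 - p))⁻¹).congr fun i => ?_
    rw [← mul_assoc, inv_mul_cancel₀ hpos.ne', one_mul]
  refine ⟨hS', ?_⟩
  calc C / (1 - p) * ∑' i, (b i - a i) ^ (1 - p)
      = ∑' i, C / (1 - p) * (b i - a i) ^ (1 - p) := (tsum_mul_left).symm
    _ ≤ T + ∫ t in Ioo (0 : ℝ) T, h t := hS.tsum_le_of_sum_le hsum
end

section
/- Let T > 0 and 0 < δ ≤ 1 be real numbers, let I be a countable index set, and let ((α_i, β_i))_{i∈I} be a family of pairwise disjoint nonempty open intervals contained in (0,T). Define S = [0,T] \ ⋃_{i∈I} (α_i, β_i). Assume that S has one-dimensional Lebesgue measure zero and that Σ_{i∈I} (β_i − α_i)^δ < ∞. Then the δ-dimensional Hausdorff measure of S is zero. -/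
open Set MeasureTheory
open scoped ENNReal

lemma my_rpow_add_le {δ : ℝ} (hδ0 : 0 < δ) (hδ1 : δ ≤ 1) (x y : ℝ≥0∞) :
    (x + y) ^ δ ≤ x ^ δ + y ^ δ := by
  have h := ENNReal.rpow_add_rpow_le x y hδ0 hδ1
  simp only [ENNReal.rpow_one, one_div_one] at h
  calc (x + y) ^ δ ≤ ((x ^ δ + y ^ δ) ^ (1 / δ)) ^ δ := ENNReal.rpow_le_rpow h hδ0.le
    _ = (x ^ δ + y ^ δ) ^ (1 / δ * δ) := (ENNReal.rpow_mul _ _ _).symm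
    _ = x ^ δ + y ^ δ := by
        rw [one_div, inv_mul_cancel₀ hδ0.ne', ENNReal.rpow_one]

lemma my_tsum_rpow_le {ι : Type*} {δ : ℝ} (hδ0 : 0 < δ) (hδ1 : δ ≤ 1)
    (f : ι → ℝ≥0∞) : (∑' i, f i) ^ δ ≤ ∑' i, f i ^ δ := by
  have hfin : ∀ s : Finset ι, (∑ i ∈ s, f i) ^ δ ≤ ∑ i ∈ s, f i ^ δ := by
    intro s
    induction s using Finset.cons_induction with
    | empty => simp [ENNReal.zero_rpow_of_pos hδ0]
    | cons a s ha ih =>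
      rw [Finset.sum_cons, Finset.sum_cons]
      exact le_trans (my_rpow_add_le hδ0 hδ1 _ _) (add_le_add le_rfl ih)
  rw [ENNReal.tsum_eq_iSup_sum]
  have hmap : (⨆ s : Finset ι, ∑ i ∈ s, f i) ^ δ
      = ⨆ s : Finset ι, (∑ i ∈ s, f i) ^ δ := by
    have := OrderIso.map_iSup (ENNReal.orderIsoRpow δ hδ0) fun s : Finset ι => ∑ i ∈ s, f i
    simpa only [ENNReal.orderIsoRpow_apply] using this
  rw [hmap]
  exact iSup_le fun s => (hfin s).trans (ENNReal.sum_le_tsum s)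

/-- If `S = [0,T] \ ⋃ᵢ (αᵢ, βᵢ)` is Lebesgue-null, where the `(αᵢ, βᵢ)` are
pairwise disjoint nonempty open subintervals of `(0,T)`, and
`Σᵢ (βᵢ - αᵢ)^δ < ∞` with `0 < δ ≤ 1`, then the `δ`-dimensional Hausdorff
measure of `S` is zero. -/
theorem hausdorff_measure_of_complement_of_intervals
    {I : Type*} [Countable I]
    (T δ : ℝ) (hT : 0 < T) (hδ0 : 0 < δ) (hδ1 : δ ≤ 1)
    (a b : I → ℝ) (hab : ∀ i, a i < b i)
    (hsub : ∀ i, Ioo (a i) (b i) ⊆ Ioo 0 T)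
    (hdisj : Pairwise (Function.onFun Disjoint fun i => Ioo (a i) (b i)))
    (hnull : volume (Icc (0 : ℝ) T \ ⋃ i, Ioo (a i) (b i)) = 0)
    (hsum : Summable fun i => (b i - a i) ^ δ) :
    μH[δ] (Icc (0 : ℝ) T \ ⋃ i, Ioo (a i) (b i)) = 0 := by
  classical
  set S := Icc (0 : ℝ) T \ ⋃ i, Ioo (a i) (b i) with hS
  set ℓ : I → ℝ≥0∞ := fun i => ENNReal.ofReal ((b i - a i) ^ δ) with hℓ
  have hba : ∀ i, 0 ≤ b i - a i := fun i => sub_nonneg.2 (hab i).le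
  have hnn : ∀ i, 0 ≤ (b i - a i) ^ δ := fun i => Real.rpow_nonneg (hba i) δ
  have htot : ∑' i, ℓ i ≠ ⊤ := by
    rw [hℓ, ← ENNReal.ofReal_tsum_of_nonneg hnn hsum]
    exact ENNReal.ofReal_ne_top
  have key : ∀ F : Finset I, ∃ t : Option {i // i ∈ F} → Set ℝ,
      (S ⊆ ⋃ c, t c) ∧
      (∑' c, EMetric.diam (t c) ^ δ ≤ ∑' i : {i // i ∉ F}, ℓ i.1) := by
    intro F
    have hends : ∀ i, 0 ≤ a i ∧ b i ≤ T := fun i => (Ioo_subset_Ioo_iff (hab i)).1 (hsub i)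
    have hdic : ∀ i j, i ≠ j → b i ≤ a j ∨ b j ≤ a i := by
      intro i j hij
      by_contra h
      push_neg at h
      obtain ⟨h1, h2⟩ := h
      have hlt : max (a i) (a j) < min (b i) (b j) := by
        rw [max_lt_iff]
        exact ⟨lt_min (hab i) h2, lt_min h1 (hab j)⟩
      obtain ⟨x, hx1, hx2⟩ := exists_between hlt
      rw [max_lt_iff] at hx1
      rw [lt_min_iff] at hx2
      exact Set.disjoint_left.1 (hdisj hij) ⟨hx1.1, hx2.1⟩ ⟨hx1.2, hx2.2⟩
    -- right-endpoint function
    have hGne : ∀ c : ℝ, (insert T ((F.filter fun i => c ≤ a i).image a)).Nonempty :=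
      fun c => ⟨T, Finset.mem_insert_self _ _⟩
    set g : ℝ → ℝ := fun c => (insert T ((F.filter fun i => c ≤ a i).image a)).min' (hGne c)
      with hg
    have hgT : ∀ c, g c ≤ T := fun c => Finset.min'_le _ _ (Finset.mem_insert_self _ _)
    have hga : ∀ c, ∀ i ∈ F, c ≤ a i → g c ≤ a i := fun c i hi hc =>
      Finset.min'_le _ _ (Finset.mem_insert_of_mem
        (Finset.mem_image_of_mem a (Finset.mem_filter.2 ⟨hi, hc⟩)))
    have hle_g : ∀ c x, x ≤ T → (∀ i ∈ F, c ≤ a i → x ≤ a i) → x ≤ g c := by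
      intro c x hxT hx
      apply Finset.le_min'
      intro y hy
      rcases Finset.mem_insert.1 hy with rfl | hy
      · exact hxT
      · obtain ⟨i, hi, rfl⟩ := Finset.mem_image.1 hy
        obtain ⟨hiF, hca⟩ := Finset.mem_filter.1 hi
        exact hx i hiF hca
    -- generic facts about a "component" Icc c₀ (g c₀) where c₀ satisfies Q
    have hA : ∀ c₀ : ℝ, (∀ i, b i ≤ c₀ ∨ c₀ ≤ a i) →
        ∀ i ∈ F, ∀ x, x ∈ Ioo (a i) (b i) → x ∉ Icc c₀ (g c₀) := by
      intro c₀ hQ i hi x hx hx'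
      rcases hQ i with h | h
      · exact lt_irrefl x (hx.2.trans_le (h.trans hx'.1))
      · exact absurd (hx'.2.trans (hga c₀ i hi h)) (not_le.2 hx.1)
    have hB : ∀ c₀ : ℝ, (∀ i, b i ≤ c₀ ∨ c₀ ≤ a i) →
        ∀ i, i ∉ F → ∀ x, x ∈ Ioo (a i) (b i) → x ∈ Icc c₀ (g c₀) →
          Ioo (a i) (b i) ⊆ Icc c₀ (g c₀) := by
      intro c₀ hQ i hiF x hx hx'
      have hca : c₀ ≤ a i := by
        rcases hQ i with h | h
        · exact absurd (hx.2.trans_le (h.trans hx'.1)) (lt_irrefl x)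
        · exact h
      have hbg : b i ≤ g c₀ := by
        apply hle_g _ _ (hends i).2
        intro j hj hcaj
        rcases hdic i j (by rintro rfl; exact hiF hj) with h | h
        · exact h
        · exact absurd ((hx'.2.trans (hga c₀ j hj hcaj)).trans_lt
            ((hab j).trans_le (h.trans hx.1.le))) (lt_irrefl x)
      exact fun y hy => ⟨hca.trans hy.1.le, hy.2.le.trans hbg⟩
    have hE : ∀ c₀ : ℝ, 0 ≤ c₀ → (∀ i, b i ≤ c₀ ∨ c₀ ≤ a i) →
        EMetric.diam (Icc c₀ (g c₀)) ^ δ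
          ≤ ∑' i : {i : I // i ∉ F ∧ Ioo (a i) (b i) ⊆ Icc c₀ (g c₀)}, ℓ i.1 := by
      intro c₀ hc0 hQ
      have hC : Icc c₀ (g c₀) ⊆
          S ∪ ⋃ i : {i : I // i ∉ F ∧ Ioo (a i) (b i) ⊆ Icc c₀ (g c₀)}, Ioo (a i.1) (b i.1) := by
        intro x hx
        by_cases hxS : x ∈ S
        · exact Or.inl hxS
        · have hx0T : x ∈ Icc (0 : ℝ) T := ⟨hc0.trans hx.1, hx.2.trans (hgT c₀)⟩
          have hxU : x ∈ ⋃ i, Ioo (a i) (b i) := by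
            by_contra h
            exact hxS ⟨hx0T, h⟩
          obtain ⟨i, hxi⟩ := mem_iUnion.1 hxU
          have hiF : i ∉ F := fun hiF => hA c₀ hQ i hiF x hxi hx
          exact Or.inr (mem_iUnion.2 ⟨⟨i, hiF, hB c₀ hQ i hiF x hxi hx⟩, hxi⟩)
      have hvol : ENNReal.ofReal (g c₀ - c₀)
          ≤ ∑' i : {i : I // i ∉ F ∧ Ioo (a i) (b i) ⊆ Icc c₀ (g c₀)},
              ENNReal.ofReal (b i.1 - a i.1) := by
        calc ENNReal.ofReal (g c₀ - c₀) = volume (Icc c₀ (g c₀)) := (Real.volume_Icc).symm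
          _ ≤ volume (S ∪ ⋃ i : {i : I // i ∉ F ∧ Ioo (a i) (b i) ⊆ Icc c₀ (g c₀)},
                Ioo (a i.1) (b i.1)) := measure_mono hC
          _ ≤ volume S + volume (⋃ i : {i : I // i ∉ F ∧ Ioo (a i) (b i) ⊆ Icc c₀ (g c₀)},
                Ioo (a i.1) (b i.1)) := measure_union_le _ _
          _ ≤ 0 + ∑' i : {i : I // i ∉ F ∧ Ioo (a i) (b i) ⊆ Icc c₀ (g c₀)},
                volume (Ioo (a i.1) (b i.1)) := add_le_add hnull.le (measure_iUnion_le _)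
          _ = _ := by simp [Real.volume_Ioo]
      calc EMetric.diam (Icc c₀ (g c₀)) ^ δ = ENNReal.ofReal (g c₀ - c₀) ^ δ := by
            rw [show EMetric.diam (Icc c₀ (g c₀)) = ENNReal.ofReal (g c₀ - c₀) from Real.ediam_Icc _ _]
        _ ≤ (∑' i : {i : I // i ∉ F ∧ Ioo (a i) (b i) ⊆ Icc c₀ (g c₀)},
              ENNReal.ofReal (b i.1 - a i.1)) ^ δ := ENNReal.rpow_le_rpow hvol hδ0.le
        _ ≤ ∑' i : {i : I // i ∉ F ∧ Ioo (a i) (b i) ⊆ Icc c₀ (g c₀)},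
              ENNReal.ofReal (b i.1 - a i.1) ^ δ := my_tsum_rpow_le hδ0 hδ1 _
        _ = ∑' i : {i : I // i ∉ F ∧ Ioo (a i) (b i) ⊆ Icc c₀ (g c₀)}, ℓ i.1 := by
            apply tsum_congr
            intro i
            rw [hℓ, ENNReal.ofReal_rpow_of_nonneg (hba i.1) hδ0.le]
    -- Q for the left endpoints we use
    have hQnone : ∀ i, b i ≤ (0 : ℝ) ∨ (0 : ℝ) ≤ a i := fun i => Or.inr (hends i).1
    have hQsome : ∀ j ∈ F, ∀ i, b i ≤ b j ∨ b j ≤ a i := by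
      intro j _ i
      rcases eq_or_ne i j with rfl | hij
      · exact Or.inl le_rfl
      · rcases hdic i j hij with h | h
        · exact Or.inl (h.trans (hab j).le)
        · exact Or.inr h
    -- the cover
    refine ⟨fun c => Option.rec (Icc 0 (g 0))
      (fun i => Icc (b i.1) (g (b i.1))) c, ?_, ?_⟩
    · -- cover property
      intro x hx
      rcases hx with ⟨hx0T, hxU⟩
      set Bx := F.filter fun i => b i ≤ x with hBx
      rcases Bx.eq_empty_or_nonempty with hBe | hBne
      · refine mem_iUnion.2 ⟨none, ?_⟩
        refine ⟨hx0T.1, hle_g _ _ hx0T.2 ?_⟩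
        intro i hi _
        by_contra h
        push_neg at h
        have hbix : b i ≤ x := by
          by_contra hb
          push_neg at hb
          exact hxU (mem_iUnion.2 ⟨i, h, hb⟩)
        have : i ∈ Bx := Finset.mem_filter.2 ⟨hi, hbix⟩
        rw [hBe] at this
        exact absurd this (Finset.notMem_empty i)
      · obtain ⟨j, hjB, hjmax⟩ := Bx.exists_max_image b hBne
        obtain ⟨hjF, hjx⟩ := Finset.mem_filter.1 hjB
        refine mem_iUnion.2 ⟨some ⟨j, hjF⟩, ?_⟩
        refine ⟨hjx, hle_g _ _ hx0T.2 ?_⟩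
        intro i hi hba'
        by_contra h
        push_neg at h
        have hbix : b i ≤ x := by
          by_contra hb
          push_neg at hb
          exact hxU (mem_iUnion.2 ⟨i, h, hb⟩)
        have hiB : i ∈ Bx := Finset.mem_filter.2 ⟨hi, hbix⟩
        exact absurd ((hjmax i hiB).trans hba') (not_le.2 (hab i))
    · -- the sum bound
      set t0 : Option {i // i ∈ F} → Set ℝ := fun c => Option.rec (Icc 0 (g 0))
        (fun i => Icc (b i.1) (g (b i.1))) c with ht0
      set Tc : Option {i // i ∈ F} → Set I := fun c =>
        {i | i ∉ F ∧ Ioo (a i) (b i) ⊆ t0 c} with hTc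
      have hDc : ∀ c, EMetric.diam (t0 c) ^ δ ≤ ∑' i : Tc c, ℓ i.1 := by
        intro c
        match c with
        | none => exact hE 0 le_rfl hQnone
        | some j =>
          have h0bj : (0 : ℝ) ≤ b j.1 := (hends j.1).1.trans (hab j.1).le
          exact hE (b j.1) h0bj (hQsome j.1 j.2)
      -- pairwise disjointness of the Tc's
      have hIoosub : ∀ (p q u v : ℝ), p < q → Ioo p q ⊆ Icc u v → u ≤ p ∧ q ≤ v := by
        intro p q u v hpq hsub'
        have h1 : Icc p q ⊆ Icc u v := by
          rw [← closure_Ioo hpq.ne]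
          exact closure_minimal hsub' isClosed_Icc
        exact ⟨(h1 (left_mem_Icc.2 hpq.le)).1, (h1 (right_mem_Icc.2 hpq.le)).2⟩
      have hdisjT : ∀ c c', c ≠ c' → ∀ i, i ∈ Tc c → i ∈ Tc c' → False := by
        have main : ∀ j ∈ F, ∀ i, i ∉ F → Ioo (a i) (b i) ⊆ Icc (b j) (g (b j)) →
            ∀ u, u ≤ a j → Ioo (a i) (b i) ⊆ Icc u (g u) → False := by
          intro j hjF i hiF hsub1 u hu hsub2
          obtain ⟨h1, h2⟩ := hIoosub _ _ _ _ (hab i) hsub1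
          obtain ⟨h3, h4⟩ := hIoosub _ _ _ _ (hab i) hsub2
          have h5 : g u ≤ a j := hga u j hjF hu
          have : b i ≤ a i := h4.trans (h5.trans ((hab j).le.trans h1))
          exact absurd this (not_le.2 (hab i))
        intro c c' hcc' i hic hic'
        obtain ⟨hiF, hsub1⟩ := hic
        obtain ⟨_, hsub2⟩ := hic'
        match c, c' with
        | none, none => exact hcc' rfl
        | none, some k =>
          exact main k.1 k.2 i hiF hsub2 0 (hends k.1).1 hsub1
        | some j, none =>
          exact main j.1 j.2 i hiF hsub1 0 (hends j.1).1 hsub2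
        | some j, some k =>
          have hjk : j.1 ≠ k.1 := fun h => hcc' (congrArg some (Subtype.ext h))
          rcases hdic j.1 k.1 hjk with h | h
          · exact main k.1 k.2 i hiF hsub2 (b j.1) h hsub1
          · exact main j.1 j.2 i hiF hsub1 (b k.1) h hsub2
      calc ∑' c, EMetric.diam (t0 c) ^ δ
          ≤ ∑' c, ∑' i : Tc c, ℓ i.1 := ENNReal.tsum_le_tsum hDc
        _ = ∑' c, ∑' i, Set.indicator (Tc c) ℓ i := by
            refine tsum_congr fun c => ?_
            exact tsum_subtype (Tc c) ℓ
        _ = ∑' i, ∑' c, Set.indicator (Tc c) ℓ i := ENNReal.tsum_comm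
        _ ≤ ∑' i, Set.indicator {i | i ∉ F} ℓ i := by
            refine ENNReal.tsum_le_tsum fun i => ?_
            by_cases hi : ∃ c, i ∈ Tc c
            · obtain ⟨c₀, hc₀⟩ := hi
              rw [tsum_eq_single c₀ (fun c hc =>
                Set.indicator_of_notMem (fun h => hdisjT c c₀ hc i h hc₀) ℓ)]
              rw [Set.indicator_of_mem hc₀]
              have hmem : i ∈ {i : I | i ∉ F} := hc₀.1
              rw [Set.indicator_of_mem hmem]
            · have hz : ∀ c, Set.indicator (Tc c) ℓ i = 0 :=
                fun c => Set.indicator_of_notMem (fun h => hi ⟨c, h⟩) ℓ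
              simp only [hz, tsum_zero]
              exact zero_le
        _ = ∑' i : {i // i ∉ F}, ℓ i.1 := (tsum_subtype _ _).symm
  choose t ht1 ht2 using key
  set tail : Finset I → ℝ≥0∞ := fun F => ∑' i : {i // i ∉ F}, ℓ i.1 with htail
  have htail0 : Filter.Tendsto tail Filter.atTop (nhds 0) :=
    ENNReal.tendsto_tsum_compl_atTop_zero htot
  set r : Finset I → ℝ≥0∞ := fun F => tail F ^ (1 / δ) with hrdef
  have hrpow : ∀ F, r F ^ δ = tail F := by
    intro F
    rw [hrdef]
    rw [← ENNReal.rpow_mul, one_div, inv_mul_cancel₀ hδ0.ne', ENNReal.rpow_one]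
  have hr0 : Filter.Tendsto r Filter.atTop (nhds 0) := by
    have := Filter.Tendsto.ennrpow_const (1 / δ) htail0
    rwa [ENNReal.zero_rpow_of_pos (by positivity)] at this
  have hdiam : ∀ F : Finset I, ∀ c, EMetric.diam (t F c) ≤ r F := by
    intro F c
    rw [← ENNReal.rpow_le_rpow_iff hδ0, hrpow]
    exact le_trans (ENNReal.le_tsum c) (ht2 F)
  have hμ := MeasureTheory.Measure.hausdorffMeasure_le_liminf_tsum δ S (l := Filter.atTop) r hr0 t
    (Filter.Eventually.of_forall hdiam) (Filter.Eventually.of_forall ht1)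
  have hlim : Filter.liminf (fun F => ∑' c, EMetric.diam (t F c) ^ δ) Filter.atTop
      ≤ (0 : ℝ≥0∞) := by
    have h1 : Filter.liminf (fun F => ∑' c, EMetric.diam (t F c) ^ δ) Filter.atTop
        ≤ Filter.liminf tail Filter.atTop :=
      Filter.liminf_le_liminf (Filter.Eventually.of_forall ht2)
    rwa [htail0.liminf_eq] at h1
  exact le_antisymm (hμ.trans hlim) zero_le
end

section
/- Let T > 0, C > 0 and 0 < p < 1 be real numbers, let I be a countable index set, and let ((α_i, β_i))_{i∈I} be a family of pairwise disjoint nonempty open intervals contained in (0,T). Let h : (0,T) → ℝ be a nonnegative Lebesgue-integrable function, and assume: (a) for every i ∈ I and every t ∈ (α_i, β_i), C·(β_i − t)^{−p} ≤ 1 + h(t); and (b) the set S = [0,T] \ ⋃_{i∈I} (α_i, β_i) has one-dimensional Lebesgue measure zero. Then the (1−p)-dimensional Hausdorff measure of S is zero. -/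
open Set MeasureTheory
open scoped ENNReal NNReal

private lemma aux_sum_rpow {ι : Type*} (s : Finset ι) (f : ι → ℝ≥0∞) {q : ℝ}
    (hq0 : 0 < q) (hq1 : q ≤ 1) :
    (∑ i ∈ s, f i) ^ q ≤ ∑ i ∈ s, f i ^ q := by
  classical
  induction s using Finset.induction_on with
  | empty => simp [ENNReal.zero_rpow_of_pos hq0]
  | insert c s hnot ih =>
      rw [Finset.sum_insert hnot, Finset.sum_insert hnot]
      exact le_trans (ENNReal.rpow_add_le_add_rpow _ _ hq0.le hq1)
        (add_le_add_right ih _)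

private lemma aux_tsum_rpow {ι : Type*} (f : ι → ℝ≥0∞) {q : ℝ}
    (hq0 : 0 < q) (hq1 : q ≤ 1) :
    (∑' i, f i) ^ q ≤ ∑' i, f i ^ q := by
  have hmono : Monotone (fun x : ℝ≥0∞ => x ^ q) :=
    fun x y hxy => ENNReal.rpow_le_rpow hxy hq0.le
  rw [ENNReal.tsum_eq_iSup_sum]
  rw [Monotone.map_iSup_of_continuousAt (ENNReal.continuous_rpow_const.continuousAt)
    hmono (by simp [ENNReal.zero_rpow_of_pos hq0])]
  exact iSup_le fun s => le_trans (aux_sum_rpow s f hq0 hq1)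
    (ENNReal.sum_le_tsum s)

/-- Abstract combined form of the paper's main theorem: if pairwise disjoint
intervals `(αᵢ, βᵢ) ⊆ (0,T)` satisfy `C (βᵢ - t)^{-p} ≤ 1 + h(t)` on each
`(αᵢ, βᵢ)` for an integrable nonnegative `h`, and the complement
`S = [0,T] \ ⋃ᵢ (αᵢ, βᵢ)` is Lebesgue-null, then the `(1-p)`-dimensional
Hausdorff measure of `S` is zero. -/
theorem hausdorff_dimension_of_singular_set
    {I : Type*} [Countable I]
    (T C p : ℝ) (hT : 0 < T) (hC : 0 < C) (hp0 : 0 < p) (hp1 : p < 1)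
    (a b : I → ℝ) (hab : ∀ i, a i < b i)
    (hsub : ∀ i, Ioo (a i) (b i) ⊆ Ioo 0 T)
    (hdisj : Pairwise (Function.onFun Disjoint fun i => Ioo (a i) (b i)))
    (h : ℝ → ℝ) (hint : IntegrableOn h (Ioo 0 T))
    (hnonneg : ∀ t ∈ Ioo (0 : ℝ) T, 0 ≤ h t)
    (hbound : ∀ i, ∀ t ∈ Ioo (a i) (b i), C * (b i - t) ^ (-p) ≤ 1 + h t)
    (hnull : volume (Icc (0 : ℝ) T \ ⋃ i, Ioo (a i) (b i)) = 0) :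
    μH[1 - p] (Icc (0 : ℝ) T \ ⋃ i, Ioo (a i) (b i)) = 0 := by
  classical
  have hq0 : (0:ℝ) < 1 - p := by linarith
  have hq1 : (1:ℝ) - p ≤ 1 := by linarith
  set S : Set ℝ := Icc (0:ℝ) T \ ⋃ i, Ioo (a i) (b i) with hSdef
  -- the index type is nonempty
  have hIne : Nonempty I := by
    by_contra hI
    rw [not_nonempty_iff] at hI
    rw [hSdef, iUnion_of_empty, diff_empty, Real.volume_Icc] at hnull
    rw [ENNReal.ofReal_eq_zero] at hnull
    linarith
  -- endpoints
  have hend : ∀ i, 0 ≤ a i ∧ b i ≤ T := fun i => (Ioo_subset_Ioo_iff (hab i)).1 (hsub i)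
  -- ordering of disjoint intervals
  have horder : ∀ i j, i ≠ j → b i ≤ a j ∨ b j ≤ a i := by
    intro i j hij
    by_contra hcon
    push_neg at hcon
    obtain ⟨h1, h2⟩ := hcon
    have hmm : max (a i) (a j) < min (b i) (b j) :=
      max_lt_iff.2 ⟨lt_min_iff.2 ⟨hab i, h2⟩, lt_min_iff.2 ⟨h1, hab j⟩⟩
    set x := (max (a i) (a j) + min (b i) (b j)) / 2 with hx
    have hx1 : x ∈ Ioo (a i) (b i) :=
      ⟨lt_of_le_of_lt (le_max_left _ _) (by rw [hx]; linarith),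
       lt_of_lt_of_le (by rw [hx]; linarith) (min_le_left _ _)⟩
    have hx2 : x ∈ Ioo (a j) (b j) :=
      ⟨lt_of_le_of_lt (le_max_right _ _) (by rw [hx]; linarith),
       lt_of_lt_of_le (by rw [hx]; linarith) (min_le_right _ _)⟩
    exact Set.disjoint_left.1 (hdisj hij) hx1 hx2
  -- total length is finite
  have hlensum : ∀ F : Finset I,
      ∑ i ∈ F, ENNReal.ofReal (b i - a i) ≤ ENNReal.ofReal T := by
    intro F
    have h1 : ∑ i ∈ F, ENNReal.ofReal (b i - a i)
        = volume (⋃ i ∈ F, Ioo (a i) (b i)) := by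
      rw [measure_biUnion_finset (fun i _ j _ hij => hdisj hij)
        (fun i _ => measurableSet_Ioo)]
      exact Finset.sum_congr rfl fun i _ => (Real.volume_Ioo).symm
    rw [h1]
    calc volume (⋃ i ∈ F, Ioo (a i) (b i)) ≤ volume (Ioo (0:ℝ) T) :=
          measure_mono (iUnion₂_subset fun i _ => hsub i)
      _ = ENNReal.ofReal T := by rw [Real.volume_Ioo, sub_zero]
  have hlen_fin : (∑' i, ENNReal.ofReal (b i - a i)) ≠ ⊤ := by
    rw [ENNReal.tsum_eq_iSup_sum]
    exact ne_top_of_le_ne_top ENNReal.ofReal_ne_top (iSup_le hlensum)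
  -- integrability facts
  have hIntR : ∀ i, IntegrableOn (fun t => 1 + h t) (Ioo (a i) (b i)) := by
    intro i
    refine Integrable.add ?_ (hint.mono_set (hsub i))
    exact integrableOn_const (by rw [Real.volume_Ioo]; exact ENNReal.ofReal_ne_top)
  have hIntL : ∀ i, IntegrableOn (fun t => C * (b i - t) ^ (-p)) (Ioo (a i) (b i)) := by
    intro i
    have h1 : IntervalIntegrable (fun x : ℝ => x ^ (-p)) volume (b i - a i) (b i - b i) :=
      intervalIntegral.intervalIntegrable_rpow' (by linarith)
    have h2 := (h1.comp_sub_left (b i)).const_mul C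
    rw [show b i - (b i - a i) = a i by ring, show b i - (b i - b i) = b i by ring] at h2
    exact ((intervalIntegrable_iff_integrableOn_Ioc_of_le (hab i).le).1 h2).mono_set
      Ioo_subset_Ioc_self
  -- key integral inequality
  have hkey : ∀ i, C / (1 - p) * (b i - a i) ^ (1 - p)
      ≤ ∫ t in Ioo (a i) (b i), (1 + h t) := by
    intro i
    have hcalc : ∫ t in Ioo (a i) (b i), C * (b i - t) ^ (-p)
        = C / (1 - p) * (b i - a i) ^ (1 - p) := by
      rw [← integral_Ioc_eq_integral_Ioo, ← intervalIntegral.integral_of_le (hab i).le]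
      rw [intervalIntegral.integral_const_mul]
      rw [intervalIntegral.integral_comp_sub_left (fun x => x ^ (-p)) (b i)]
      rw [sub_self]
      rw [integral_rpow (Or.inl (by linarith))]
      rw [show -p + 1 = 1 - p from by ring]
      rw [Real.zero_rpow (by linarith : (1:ℝ) - p ≠ 0)]
      rw [sub_zero]
      ring
    rw [← hcalc]
    exact setIntegral_mono_on (hIntL i) (hIntR i) measurableSet_Ioo
      (fun t ht => hbound i t ht)
  have hIntT : IntegrableOn (fun t => 1 + h t) (Ioo 0 T) := by
    refine Integrable.add ?_ hint
    exact integrableOn_const (by rw [Real.volume_Ioo]; exact ENNReal.ofReal_ne_top)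
  set M : ℝ := (1 - p) / C * ∫ t in Ioo (0:ℝ) T, (1 + h t) with hM
  have hsum_q : ∀ F : Finset I, ∑ i ∈ F, (b i - a i) ^ (1 - p) ≤ M := by
    intro F
    have h1 : ∀ i ∈ F, (b i - a i) ^ (1 - p)
        ≤ (1 - p) / C * ∫ t in Ioo (a i) (b i), (1 + h t) := by
      intro i _
      have hk := hkey i
      calc (b i - a i) ^ (1 - p)
          = ((1 - p) / C) * (C / (1 - p) * (b i - a i) ^ (1 - p)) := by
            field_simp
        _ ≤ ((1 - p) / C) * ∫ t in Ioo (a i) (b i), (1 + h t) :=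
            mul_le_mul_of_nonneg_left hk (by positivity)
    calc ∑ i ∈ F, (b i - a i) ^ (1 - p)
        ≤ ∑ i ∈ F, (1 - p) / C * ∫ t in Ioo (a i) (b i), (1 + h t) :=
          Finset.sum_le_sum h1
      _ = (1 - p) / C * ∑ i ∈ F, ∫ t in Ioo (a i) (b i), (1 + h t) := by
          rw [Finset.mul_sum]
      _ = (1 - p) / C * ∫ t in ⋃ i ∈ F, Ioo (a i) (b i), (1 + h t) := by
          rw [integral_biUnion_finset F (fun i _ => measurableSet_Ioo)
            (fun i _ j _ hij => hdisj hij) (fun i _ => hIntR i)]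
      _ ≤ (1 - p) / C * ∫ t in Ioo (0:ℝ) T, (1 + h t) := by
          refine mul_le_mul_of_nonneg_left ?_ (by positivity)
          refine setIntegral_mono_set hIntT ?_ ?_
          · exact (ae_restrict_iff' measurableSet_Ioo).2
              (Filter.Eventually.of_forall fun x hx => by
                have := hnonneg x hx; simp; linarith)
          · exact HasSubset.Subset.eventuallyLE (iUnion₂_subset fun i _ => hsub i)
  have hq_fin : (∑' i, (ENNReal.ofReal (b i - a i)) ^ (1 - p)) ≠ ⊤ := by
    have hco : ∀ i, (ENNReal.ofReal (b i - a i)) ^ (1 - p)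
        = ENNReal.ofReal ((b i - a i) ^ (1 - p)) := fun i =>
      ENNReal.ofReal_rpow_of_nonneg (by linarith [hab i]) hq0.le
    rw [tsum_congr hco, ENNReal.tsum_eq_iSup_sum]
    refine ne_top_of_le_ne_top (ENNReal.ofReal_ne_top : ENNReal.ofReal M ≠ ⊤)
      (iSup_le fun F => ?_)
    rw [← ENNReal.ofReal_sum_of_nonneg (fun i _ => Real.rpow_nonneg (by linarith [hab i]) _)]
    exact ENNReal.ofReal_le_ofReal (hsum_q F)
  -- the covering construction
  have key_cover : ∀ F : Finset I, F.Nonempty →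
      ∃ t : Option I → Set ℝ,
        (S ⊆ ⋃ k, t k) ∧
        (∀ k, EMetric.diam (t k) ≤ ∑' i : {i : I // i ∉ F}, ENNReal.ofReal (b i.1 - a i.1)) ∧
        (∑' k, EMetric.diam (t k) ^ (1 - p) ≤
          ∑' i : {i : I // i ∉ F}, (ENNReal.ofReal (b i.1 - a i.1)) ^ (1 - p)) := by
    intro F hF
    set c : ℝ := F.inf' hF a with hc
    set m : I → ℝ := fun i => min (F.inf' hF fun j => if b i ≤ a j then a j else T) T with hm
    have hcle : ∀ j ∈ F, c ≤ a j := fun j hj => Finset.inf'_le a hj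
    have hcT : c ≤ T := by
      obtain ⟨i₀, hi₀F, hceq⟩ := Finset.exists_mem_eq_inf' hF a
      rw [hc, hceq]
      exact le_trans (hab i₀).le (hend i₀).2
    have hc0 : 0 ≤ c := by
      obtain ⟨i₀, hi₀F, hceq⟩ := Finset.exists_mem_eq_inf' hF a
      rw [hc, hceq]
      exact (hend i₀).1
    have hmleT : ∀ i, m i ≤ T := fun i => min_le_right _ _
    have hmle : ∀ i, ∀ j ∈ F, b i ≤ a j → m i ≤ a j := by
      intro i j hj hba
      refine le_trans (min_le_left _ _) (le_trans (Finset.inf'_le _ hj) ?_)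
      rw [if_pos hba]
    have hbm : ∀ i, b i ≤ m i := by
      intro i
      refine le_min (Finset.le_inf' hF _ fun j hj => ?_) (hend i).2
      split
      · assumption
      · exact (hend i).2
    set t : Option I → Set ℝ := fun k =>
      k.elim (Icc 0 c) (fun i => if i ∈ F then Icc (b i) (m i) else ∅) with htdef
    have htnone : t none = Icc 0 c := rfl
    have htsome : ∀ i, i ∈ F → t (some i) = Icc (b i) (m i) := by
      intro i hi
      simp only [htdef, Option.elim, if_pos hi]
    have htsome' : ∀ i, i ∉ F → t (some i) = (∅ : Set ℝ) := by
      intro i hi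
      simp only [htdef, Option.elim, if_neg hi]
    -- cover pieces avoid the intervals indexed by F
    have havoid : ∀ k j, j ∈ F → ∀ x, x ∈ t k → x ∉ Ioo (a j) (b j) := by
      intro k j hj x hxk hxj
      cases k with
      | none =>
          rw [htnone] at hxk
          have := hcle j hj
          have := hxj.1
          have := hxk.2
          linarith
      | some i =>
          by_cases hiF : i ∈ F
          · rw [htsome i hiF] at hxk
            rcases le_or_gt (b i) (a j) with hba | hba
            · have := hmle i j hj hba
              have := hxk.2
              have := hxj.1
              linarith
            · rcases eq_or_ne i j with rfl | hij
              · have := hxk.1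
                have := hxj.2
                linarith
              · rcases horder i j hij with hc1 | hc2
                · linarith
                · have := hxk.1
                  have := hxj.2
                  have := hab i
                  linarith
          · rw [htsome' i hiF] at hxk
            exact hxk
    -- if a piece meets an interval not indexed by F, it contains it
    have hmeet : ∀ k i, i ∉ F → ∀ x, x ∈ t k → x ∈ Ioo (a i) (b i) →
        Ioo (a i) (b i) ⊆ t k := by
      intro k i hiF x hxk hxi
      cases k with
      | none =>
          rw [htnone] at hxk ⊢
          intro y hy
          refine ⟨by linarith [(hend i).1, hy.1], ?_⟩
          rw [hc]
          refine Finset.le_inf' hF a fun j hj => ?_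
          have hij : i ≠ j := fun hcontra => hiF (hcontra ▸ hj)
          rcases horder i j hij with h1 | h2
          · linarith [hy.2]
          · exfalso
            have h3 := hcle j hj
            have := hxk.2
            have := hxi.1
            have := hab j
            linarith
      | some i' =>
          by_cases hi'F : i' ∈ F
          · rw [htsome i' hi'F] at hxk ⊢
            have hii' : i ≠ i' := fun hcontra => hiF (hcontra ▸ hi'F)
            have hb'a : b i' ≤ a i := by
              rcases horder i i' hii' with h1 | h2
              · exfalso
                have := hxi.2
                have := hab i'
                have := hxk.1
                linarith
              · exact h2
            intro y hy
            refine ⟨by linarith [hy.1], ?_⟩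
            rw [hm]
            refine le_min (Finset.le_inf' hF _ fun j hj => ?_)
              (by linarith [(hend i).2, hy.2])
            split_ifs with hba
            · have hij : i ≠ j := fun hcontra => hiF (hcontra ▸ hj)
              rcases horder i j hij with h1 | h2
              · linarith [hy.2]
              · exfalso
                have h3 := hmle i' j hj hba
                have := hxk.2
                have := hxi.1
                have := hab j
                linarith
            · linarith [(hend i).2, hy.2]
          · rw [htsome' i' hi'F] at hxk
            exact absurd hxk (notMem_empty x)
    -- the pieces are pairwise disjoint
    have hdisjt : ∀ k k', k ≠ k' → ∀ x, x ∈ t k → x ∉ t k' := by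
      have haux : ∀ i i', i ∈ F → i' ∈ F → b i ≤ a i' → ∀ x,
          x ∈ Icc (b i) (m i) → x ∉ Icc (b i') (m i') := by
        intro i i' hi hi' hba x hx hx'
        have := hmle i i' hi' hba
        have := hx.2
        have := hx'.1
        have := hab i'
        linarith
      have hnonesome : ∀ i, i ∈ F → ∀ x, x ∈ t none → x ∉ t (some i) := by
        intro i hiF x hx hx'
        rw [htnone] at hx
        rw [htsome i hiF] at hx'
        have := hcle i hiF
        have := hab i
        have := hx.2
        have := hx'.1
        linarith
      intro k k' hkk' x hxk hxk'
      cases k with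
      | none =>
          cases k' with
          | none => exact hkk' rfl
          | some i =>
              by_cases hiF : i ∈ F
              · exact hnonesome i hiF x hxk hxk'
              · rw [htsome' i hiF] at hxk'
                exact hxk'
      | some i =>
          cases k' with
          | none =>
              by_cases hiF : i ∈ F
              · exact hnonesome i hiF x hxk' hxk
              · rw [htsome' i hiF] at hxk
                exact hxk
          | some i' =>
              by_cases hiF : i ∈ F
              · by_cases hi'F : i' ∈ F
                · have hii' : i ≠ i' := by
                    intro hcon
                    exact hkk' (by rw [hcon])
                  rw [htsome i hiF] at hxk
                  rw [htsome i' hi'F] at hxk'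
                  rcases horder i i' hii' with h1 | h2
                  · exact haux i i' hiF hi'F h1 x hxk hxk'
                  · exact haux i' i hi'F hiF h2 x hxk' hxk
                · rw [htsome' i' hi'F] at hxk'
                  exact hxk'
              · rw [htsome' i hiF] at hxk
                exact hxk
    -- pieces are contained in [0, T]
    have hsubT : ∀ k, t k ⊆ Icc 0 T := by
      intro k x hx
      cases k with
      | none =>
          rw [htnone] at hx
          exact ⟨hx.1, le_trans hx.2 hcT⟩
      | some i =>
          by_cases hiF : i ∈ F
          · rw [htsome i hiF] at hx
            exact ⟨le_trans (le_trans (hend i).1 (hab i).le) hx.1,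
              le_trans hx.2 (hmleT i)⟩
          · rw [htsome' i hiF] at hx
            exact absurd hx (notMem_empty x)
    -- diameter equals volume for each piece
    have hdv : ∀ k, EMetric.diam (t k) = volume (t k) := by
      intro k
      cases k with
      | none => rw [htnone]; change Metric.ediam _ = _; rw [Real.ediam_Icc, Real.volume_Icc]
      | some i =>
          by_cases hiF : i ∈ F
          · rw [htsome i hiF]; change Metric.ediam _ = _; rw [Real.ediam_Icc, Real.volume_Icc]
          · rw [htsome' i hiF]
            rw [measure_empty]; exact Metric.ediam_empty (X := ℝ)
    -- each piece is covered by S together with the small intervals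
    have hcover_i : ∀ k, t k ⊆ S ∪ ⋃ i : {i : I // i ∉ F},
        (t k ∩ Ioo (a i.1) (b i.1)) := by
      intro k x hx
      by_cases hxS : x ∈ S
      · exact Or.inl hxS
      · right
        have hxT : x ∈ Icc 0 T := hsubT k hx
        have hxU : x ∈ ⋃ i, Ioo (a i) (b i) := by
          by_contra hcon
          exact hxS ⟨hxT, hcon⟩
        obtain ⟨i, hxi⟩ := mem_iUnion.1 hxU
        have hiF : i ∉ F := fun hiF => havoid k i hiF x hx hxi
        exact mem_iUnion.2 ⟨⟨i, hiF⟩, hx, hxi⟩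
    -- volume bound for each piece
    have hvol : ∀ k, volume (t k)
        ≤ ∑' i : {i : I // i ∉ F}, volume (t k ∩ Ioo (a i.1) (b i.1)) := by
      intro k
      calc volume (t k)
          ≤ volume (S ∪ ⋃ i : {i : I // i ∉ F}, (t k ∩ Ioo (a i.1) (b i.1))) :=
            measure_mono (hcover_i k)
        _ ≤ volume S + volume (⋃ i : {i : I // i ∉ F}, (t k ∩ Ioo (a i.1) (b i.1))) :=
            measure_union_le _ _
        _ ≤ 0 + ∑' i : {i : I // i ∉ F}, volume (t k ∩ Ioo (a i.1) (b i.1)) :=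
            add_le_add hnull.le (measure_iUnion_le _)
        _ = ∑' i : {i : I // i ∉ F}, volume (t k ∩ Ioo (a i.1) (b i.1)) := zero_add _
    refine ⟨t, ?_, ?_, ?_⟩
    · -- covering of S
      intro x hxS
      obtain ⟨hxT, hxnot⟩ := hxS
      have hxn : ∀ i, x ∉ Ioo (a i) (b i) := fun i hxi => hxnot (mem_iUnion.2 ⟨i, hxi⟩)
      rcases le_or_gt x c with hxc | hcx
      · exact mem_iUnion.2 ⟨none, by rw [htnone]; exact ⟨hxT.1, hxc⟩⟩
      · obtain ⟨i₀, hi₀F, hceq⟩ := Finset.exists_mem_eq_inf' hF a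
        have hxa0 : a i₀ < x := by rw [← hceq]; exact hcx
        have hxb0 : b i₀ ≤ x := by
          by_contra hlt
          push_neg at hlt
          exact hxn i₀ ⟨hxa0, hlt⟩
        have hF'ne : (F.filter (fun j => b j ≤ x)).Nonempty :=
          ⟨i₀, Finset.mem_filter.2 ⟨hi₀F, hxb0⟩⟩
        obtain ⟨j, hjF', hjmax⟩ := Finset.exists_max_image (F.filter (fun j => b j ≤ x)) b hF'ne
        obtain ⟨hjF, hbjx⟩ := Finset.mem_filter.1 hjF'
        refine mem_iUnion.2 ⟨some j, ?_⟩
        rw [htsome j hjF]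
        refine ⟨hbjx, ?_⟩
        rw [hm]
        refine le_min (Finset.le_inf' hF _ fun j' hj' => ?_) hxT.2
        split_ifs with hba
        · by_contra hcon
          push_neg at hcon
          have hxbj' : b j' ≤ x := by
            by_contra hlt
            push_neg at hlt
            exact hxn j' ⟨hcon, hlt⟩
          have hj'F' : j' ∈ F.filter (fun j => b j ≤ x) :=
            Finset.mem_filter.2 ⟨hj', hxbj'⟩
          have hmax := hjmax j' hj'F'
          have := hab j'
          linarith
        · exact hxT.2
    · -- diameter bound
      intro k
      rw [hdv k]
      refine le_trans (hvol k) (ENNReal.tsum_le_tsum fun i => ?_)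
      exact le_trans (measure_mono inter_subset_right) (le_of_eq Real.volume_Ioo)
    · -- sum bound
      have hsingle : ∀ i : {i : I // i ∉ F},
          (∑' k : Option I, volume (t k ∩ Ioo (a i.1) (b i.1)) ^ (1 - p))
            ≤ (ENNReal.ofReal (b i.1 - a i.1)) ^ (1 - p) := by
        intro i
        by_cases hex : ∃ k₀, volume (t k₀ ∩ Ioo (a i.1) (b i.1)) ≠ 0
        · obtain ⟨k₀, hk₀⟩ := hex
          have hz : ∀ k, k ≠ k₀ → volume (t k ∩ Ioo (a i.1) (b i.1)) ^ (1 - p) = 0 := by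
            intro k hk
            have hzero : volume (t k ∩ Ioo (a i.1) (b i.1)) = 0 := by
              by_contra hne
              obtain ⟨x, hx⟩ := nonempty_of_measure_ne_zero hne
              obtain ⟨x₀, hx₀⟩ := nonempty_of_measure_ne_zero hk₀
              have h1 := hmeet k i.1 i.2 x hx.1 hx.2
              have h2 := hmeet k₀ i.1 i.2 x₀ hx₀.1 hx₀.2
              obtain ⟨y, hy⟩ := nonempty_Ioo.2 (hab i.1)
              exact hdisjt k k₀ hk y (h1 hy) (h2 hy)
            rw [hzero, ENNReal.zero_rpow_of_pos hq0]
          rw [tsum_eq_single k₀ hz]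
          refine ENNReal.rpow_le_rpow ?_ hq0.le
          exact le_trans (measure_mono inter_subset_right) (le_of_eq Real.volume_Ioo)
        · push_neg at hex
          have : ∀ k : Option I, volume (t k ∩ Ioo (a i.1) (b i.1)) ^ (1 - p) = 0 :=
            fun k => by rw [hex k, ENNReal.zero_rpow_of_pos hq0]
          rw [tsum_congr this, tsum_zero]
          exact zero_le
      calc ∑' k, EMetric.diam (t k) ^ (1 - p)
          ≤ ∑' k, (∑' i : {i : I // i ∉ F}, volume (t k ∩ Ioo (a i.1) (b i.1))) ^ (1 - p) := by
            refine ENNReal.tsum_le_tsum fun k => ?_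
            rw [hdv k]
            exact ENNReal.rpow_le_rpow (hvol k) hq0.le
        _ ≤ ∑' k, ∑' i : {i : I // i ∉ F}, volume (t k ∩ Ioo (a i.1) (b i.1)) ^ (1 - p) :=
            ENNReal.tsum_le_tsum fun k => aux_tsum_rpow _ hq0 hq1
        _ = ∑' i : {i : I // i ∉ F}, ∑' k, volume (t k ∩ Ioo (a i.1) (b i.1)) ^ (1 - p) :=
            ENNReal.tsum_comm
        _ ≤ ∑' i : {i : I // i ∉ F}, (ENNReal.ofReal (b i.1 - a i.1)) ^ (1 - p) :=
            ENNReal.tsum_le_tsum hsingle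
  -- choose an exhausting sequence of finite sets
  obtain ⟨e, he⟩ := exists_surjective_nat I
  set Fn : ℕ → Finset I := fun n => (Finset.range (n+1)).image e with hFndef
  have hFne : ∀ n, (Fn n).Nonempty :=
    fun n => ⟨e 0, Finset.mem_image.2 ⟨0, Finset.mem_range.2 (Nat.succ_pos n), rfl⟩⟩
  have hFmono : Monotone Fn := fun n m hnm =>
    Finset.image_subset_image (Finset.range_subset_range.2 (by omega))
  have hFtend : Filter.Tendsto Fn Filter.atTop Filter.atTop := by
    refine Filter.tendsto_atTop_finset_of_monotone hFmono fun i => ?_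
    obtain ⟨k, hk⟩ := he i
    exact ⟨k, Finset.mem_image.2 ⟨k, Finset.mem_range.2 (by omega), hk⟩⟩
  set r : ℕ → ℝ≥0∞ := fun n => ∑' i : {i : I // i ∉ Fn n}, ENNReal.ofReal (b i.1 - a i.1)
    with hrdef
  set R : ℕ → ℝ≥0∞ := fun n => ∑' i : {i : I // i ∉ Fn n},
    (ENNReal.ofReal (b i.1 - a i.1)) ^ (1 - p) with hRdef
  have hr : Filter.Tendsto r Filter.atTop (nhds 0) :=
    (ENNReal.tendsto_tsum_compl_atTop_zero hlen_fin).comp hFtend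
  have hR : Filter.Tendsto R Filter.atTop (nhds 0) :=
    (ENNReal.tendsto_tsum_compl_atTop_zero hq_fin).comp hFtend
  choose t ht1 ht2 ht3 using fun n => key_cover (Fn n) (hFne n)
  have hmain : μH[1 - p] S ≤ Filter.liminf
      (fun n => ∑' k, EMetric.diam (t n k) ^ (1 - p)) Filter.atTop :=
    MeasureTheory.Measure.hausdorffMeasure_le_liminf_tsum (1 - p) S r hr t
      (Filter.Eventually.of_forall ht2) (Filter.Eventually.of_forall ht1)
  have hlim : Filter.liminf (fun n => ∑' k, EMetric.diam (t n k) ^ (1 - p)) Filter.atTop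
      ≤ Filter.liminf R Filter.atTop :=
    Filter.liminf_le_liminf (Filter.Eventually.of_forall ht3)
  rw [hR.liminf_eq] at hlim
  exact le_antisymm (hmain.trans hlim) zero_le
end
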